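/- For every set partition A of {1,…,n}: Σ_{arcs α of A} cross(α) = Σ_{v=1}^{n} depth(v) − Σ_{arcs α of A} depth(α) − Σ_{blocks β of A} depth(β). -/

import Mathlib

open scoped Classical
/-- `(i,j)` is an arc of the set partition `P` of `{1,…,n}` (realized on `Fin n`):
`i < j`, both lie in a common block, and no element of that block is strictly
between `i` and `j`. -/
def IsArc {n : ℕ} (P : Finpartition (Finset.univ : Finset (Fin n))) (i j : Fin n) : Prop :=
  i < j ∧ ∃ b ∈ P.parts, i ∈ b ∧ j ∈ b ∧ ∀ k ∈ b, ¬(i < k ∧ k < j)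

/-- The finite set of arcs of a set partition. -/
noncomputable def arcs {n : ℕ} (P : Finpartition (Finset.univ : Finset (Fin n))) :
    Finset (Fin n × Fin n) :=
  Finset.univ.filter (fun p => IsArc P p.1 p.2)

/-- Depth of a vertex `v`: the number of arcs `(r,s)` with `r < v < s`. -/
noncomputable def depthV {n : ℕ} (P : Finpartition (Finset.univ : Finset (Fin n)))
    (v : Fin n) : ℕ :=
  ((arcs P).filter (fun p => p.1 < v ∧ v < p.2)).card

/-- Depth of an arc `α = (i,j)`: the number of arcs `(r,s)` with `r < i` and `s > j`. -/
noncomputable def depthArc {n : ℕ} (P : Finpartition (Finset.univ : Finset (Fin n)))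
    (α : Fin n × Fin n) : ℕ :=
  ((arcs P).filter (fun p => p.1 < α.1 ∧ α.2 < p.2)).card

/-- Depth of a block `b` (with minimum `i` and maximum `j`): the number of arcs
`(r,s)` with `r < i` and `s > j`; equivalently (for the nonempty blocks of a
partition) the arcs lying strictly above every vertex of `b`. -/
noncomputable def depthBlock {n : ℕ} (P : Finpartition (Finset.univ : Finset (Fin n)))
    (b : Finset (Fin n)) : ℕ :=
  ((arcs P).filter (fun p => ∀ v ∈ b, p.1 < v ∧ v < p.2)).card

/-- Two arcs `(i,j)` and `(r,s)` cross if `i < r < j < s` or `r < i < s < j`. -/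
def ArcCross {n : ℕ} (α β : Fin n × Fin n) : Prop :=
  (α.1 < β.1 ∧ β.1 < α.2 ∧ α.2 < β.2) ∨ (β.1 < α.1 ∧ α.1 < β.2 ∧ β.2 < α.2)

/-- `cross(α)`: the number of blocks of `P` containing at least one arc crossing `α`. -/
noncomputable def crossNum {n : ℕ} (P : Finpartition (Finset.univ : Finset (Fin n)))
    (α : Fin n × Fin n) : ℕ :=
  (P.parts.filter (fun b => ∃ p ∈ arcs P, p.1 ∈ b ∧ p.2 ∈ b ∧ ArcCross α p)).card

/-- The depth-index `t(A) = Σ_{i=1}^{k}(n−i) − Σ_v depth(v) + Σ_α depth(α)`,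
where `k` is the number of arcs. -/
noncomputable def tIdx {n : ℕ} (P : Finpartition (Finset.univ : Finset (Fin n))) : ℤ :=
  (∑ i ∈ Finset.range (arcs P).card, ((n : ℤ) - (i + 1)))
    - (∑ v : Fin n, (depthV P v : ℤ))
    + ∑ α ∈ arcs P, (depthArc P α : ℤ)

/-- The crossing-index `c(A) = Σ_{i=1}^{k}(n−i) − Σ_β depth(β) − Σ_α cross(α)`. -/
noncomputable def cIdx {n : ℕ} (P : Finpartition (Finset.univ : Finset (Fin n))) : ℤ :=
  (∑ i ∈ Finset.range (arcs P).card, ((n : ℤ) - (i + 1)))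
    - (∑ b ∈ P.parts, (depthBlock P b : ℤ))
    - ∑ α ∈ arcs P, (crossNum P α : ℤ)

/-- The rook `φ(A)` associated to a set partition: `φ(A)(j) = i` (in 1-based
values) whenever `(i,j)` is an arc, and `φ(A)(j) = 0` otherwise. Since at most
one arc ends at `j`, the sum below picks out that unique value. -/
noncomputable def phiRook {n : ℕ} (P : Finpartition (Finset.univ : Finset (Fin n))) :
    Fin n → ℕ :=
  fun j => ∑ i : Fin n, if IsArc P i j then i.val + 1 else 0

section Aux

variable {n : ℕ} (P : Finpartition (Finset.univ : Finset (Fin n)))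

lemma mem_arcs {p : Fin n × Fin n} : p ∈ arcs P ↔ IsArc P p.1 p.2 := by
  simp [arcs]

lemma arc_gap {b : Finset (Fin n)} (hb : b ∈ P.parts) {i j : Fin n}
    (h : IsArc P i j) (hib : i ∈ b) : j ∈ b ∧ ∀ k ∈ b, ¬(i < k ∧ k < j) := by
  obtain ⟨hij, b', hb', hib', hjb', hgap⟩ := h
  obtain rfl : b' = b := P.eq_of_mem_parts hb' hb hib' hib
  exact ⟨hjb', hgap⟩

lemma consec_arc {b : Finset (Fin n)} (hb : b ∈ P.parts) {i j : Fin n}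
    (hib : i ∈ b) (hjb : j ∈ b) (hij : i < j)
    (hgap : ∀ k ∈ b, ¬(i < k ∧ k < j)) : (i, j) ∈ arcs P :=
  (mem_arcs P).2 ⟨hij, b, hb, hib, hjb, hgap⟩

lemma block_count {α : Fin n × Fin n} (hα : α ∈ arcs P) :
    (P.parts.filter (fun b => α.1 ∈ b ∧ α.2 ∈ b)).card = 1 := by
  obtain ⟨hlt, b0, hb0, h1, h2, _⟩ := (mem_arcs P).1 hα
  rw [Finset.card_eq_one]
  refine ⟨b0, ?_⟩
  ext b
  simp only [Finset.mem_filter, Finset.mem_singleton]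
  constructor
  · rintro ⟨hb, hb1, _⟩; exact P.eq_of_mem_parts hb hb0 hb1 h1
  · rintro rfl; exact ⟨hb0, h1, h2⟩

lemma key_lemma {p : Fin n × Fin n} (hp : p ∈ arcs P) {b : Finset (Fin n)}
    (hb : b ∈ P.parts) :
    (b.filter (fun v => p.1 < v ∧ v < p.2)).card
      = ((arcs P).filter (fun α => α.1 ∈ b ∧ α.2 ∈ b ∧ p.1 < α.1 ∧ α.2 < p.2)).card
        + ((if ∀ v ∈ b, p.1 < v ∧ v < p.2 then 1 else 0)
          + (if ∃ q ∈ arcs P, q.1 ∈ b ∧ q.2 ∈ b ∧ ArcCross p q then 1 else 0)) := by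
  obtain ⟨hp12, bp, hbp, hpm1, hpm2, hpgap⟩ := (mem_arcs P).1 hp
  set S := b.filter (fun v => p.1 < v ∧ v < p.2) with hSdef
  have hmemS : ∀ v, v ∈ S ↔ v ∈ b ∧ p.1 < v ∧ v < p.2 := by
    intro v; simp [hSdef]
  by_cases hSne : S.Nonempty
  · -- nonempty case
    set m := S.min' hSne with hmdef
    have hmS : m ∈ S := S.min'_mem hSne
    have hmb : m ∈ b := ((hmemS m).1 hmS).1
    have hm1 : p.1 < m := ((hmemS m).1 hmS).2.1
    have hm2 : m < p.2 := ((hmemS m).1 hmS).2.2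
    -- p.1 and p.2 are not in b
    have hp1nb : p.1 ∉ b := by
      intro h
      have : b = bp := P.eq_of_mem_parts hb hbp h hpm1
      exact hpgap m (this ▸ hmb) ⟨hm1, hm2⟩
    have hp2nb : p.2 ∉ b := by
      intro h
      have : b = bp := P.eq_of_mem_parts hb hbp h hpm2
      exact hpgap m (this ▸ hmb) ⟨hm1, hm2⟩
    -- bijection : nested arcs of b ↔ S.erase m
    have hcardT : ((arcs P).filter
        (fun α => α.1 ∈ b ∧ α.2 ∈ b ∧ p.1 < α.1 ∧ α.2 < p.2)).card
        = (S.erase m).card := by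
      refine Finset.card_bij (fun α _ => α.2) ?_ ?_ ?_
      · intro α hα
        simp only [Finset.mem_filter] at hα
        obtain ⟨hαarc, hα1b, hα2b, hα1, hα2⟩ := hα
        have h12 : α.1 < α.2 := ((mem_arcs P).1 hαarc).1
        have hα2S : α.2 ∈ S := (hmemS α.2).2 ⟨hα2b, lt_trans hα1 h12, hα2⟩
        have hα1S : α.1 ∈ S := (hmemS α.1).2 ⟨hα1b, hα1, lt_trans h12 hα2⟩
        refine Finset.mem_erase.2 ⟨?_, hα2S⟩
        have : m ≤ α.1 := S.min'_le _ hα1S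
        exact ne_of_gt (lt_of_le_of_lt this h12)
      · intro α hα α' hα' heq
        have h2eq : α.2 = α'.2 := heq
        simp only [Finset.mem_filter] at hα hα'
        obtain ⟨hαarc, hα1b, hα2b, _, _⟩ := hα
        obtain ⟨hα'arc, hα'1b, hα'2b, _, _⟩ := hα'
        have g := (arc_gap P hb ((mem_arcs P).1 hαarc) hα1b).2
        have g' := (arc_gap P hb ((mem_arcs P).1 hα'arc) hα'1b).2
        have h12 : α.1 < α.2 := ((mem_arcs P).1 hαarc).1
        have h12' : α'.1 < α'.2 := ((mem_arcs P).1 hα'arc).1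
        have h1eq : α.1 = α'.1 := by
          rcases lt_trichotomy α.1 α'.1 with h | h | h
          · exact absurd ⟨h, h2eq ▸ h12'⟩ (g α'.1 hα'1b)
          · exact h
          · exact absurd ⟨h, h2eq ▸ h12⟩ (g' α.1 hα1b)
        exact Prod.ext h1eq h2eq
      · intro v hv
        obtain ⟨hvne, hvS⟩ := Finset.mem_erase.1 hv
        obtain ⟨hvb, hv1, hv2⟩ := (hmemS v).1 hvS
        have hmv : m < v := lt_of_le_of_ne (S.min'_le v hvS) (Ne.symm hvne)
        have hne : (b.filter (fun x => x < v)).Nonempty :=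
          ⟨m, Finset.mem_filter.2 ⟨hmb, hmv⟩⟩
        set w := (b.filter (fun x => x < v)).max' hne with hwdef
        have hwmem := (b.filter (fun x => x < v)).max'_mem hne
        have hwb : w ∈ b := (Finset.mem_filter.1 hwmem).1
        have hwv : w < v := (Finset.mem_filter.1 hwmem).2
        have hmw : m ≤ w := (b.filter (fun x => x < v)).le_max'
          m (Finset.mem_filter.2 ⟨hmb, hmv⟩)
        have hgap : ∀ k ∈ b, ¬(w < k ∧ k < v) := by
          rintro k hk ⟨hk1, hk2⟩
          have : k ≤ w := (b.filter (fun x => x < v)).le_max'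
            k (Finset.mem_filter.2 ⟨hk, hk2⟩)
          exact absurd hk1 (not_lt.2 this)
        have harc : (w, v) ∈ arcs P := consec_arc P hb hwb hvb hwv hgap
        exact ⟨(w, v), Finset.mem_filter.2 ⟨harc, hwb, hvb, lt_of_lt_of_le hm1 hmw, hv2⟩, rfl⟩
    rw [hcardT]
    -- exactly one of the two indicators is 1
    by_cases hall : ∀ v ∈ b, p.1 < v ∧ v < p.2
    · have hnocross : ¬∃ q ∈ arcs P, q.1 ∈ b ∧ q.2 ∈ b ∧ ArcCross p q := by
        rintro ⟨q, hqarc, hq1b, hq2b, hcross⟩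
        rcases hcross with ⟨_, _, h3⟩ | ⟨h1, _, _⟩
        · exact absurd h3 (not_lt.2 (le_of_lt (hall q.2 hq2b).2))
        · exact absurd h1 (not_lt.2 (le_of_lt (hall q.1 hq1b).1))
      rw [if_pos hall, if_neg hnocross]
      have := Finset.card_erase_add_one (hmS)
      omega
    · have hcross : ∃ q ∈ arcs P, q.1 ∈ b ∧ q.2 ∈ b ∧ ArcCross p q := by
        push_neg at hall
        obtain ⟨u, hub, hu⟩ := hall
        have hu1 : u ≠ p.1 := fun h => hp1nb (h ▸ hub)
        have hu2 : u ≠ p.2 := fun h => hp2nb (h ▸ hub)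
        have : u < p.1 ∨ p.2 < u := by
          rcases lt_or_ge u p.1 with h | h
          · exact Or.inl h
          · have h1 : p.1 < u := lt_of_le_of_ne h (Ne.symm hu1)
            exact Or.inr (lt_of_le_of_ne (hu h1) (Ne.symm hu2))
        rcases this with hul | hur
        · -- u < p.1 : crossing arc jumping over p.1
          have hne1 : (b.filter (fun x => x < p.1)).Nonempty :=
            ⟨u, Finset.mem_filter.2 ⟨hub, hul⟩⟩
          set w := (b.filter (fun x => x < p.1)).max' hne1 with hwdef
          have hwmem := (b.filter (fun x => x < p.1)).max'_mem hne1
          have hwb : w ∈ b := (Finset.mem_filter.1 hwmem).1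
          have hwp1 : w < p.1 := (Finset.mem_filter.1 hwmem).2
          have hne2 : (b.filter (fun x => w < x)).Nonempty :=
            ⟨m, Finset.mem_filter.2 ⟨hmb, lt_trans hwp1 hm1⟩⟩
          set w' := (b.filter (fun x => w < x)).min' hne2 with hw'def
          have hw'mem := (b.filter (fun x => w < x)).min'_mem hne2
          have hw'b : w' ∈ b := (Finset.mem_filter.1 hw'mem).1
          have hww' : w < w' := (Finset.mem_filter.1 hw'mem).2
          have hw'm : w' ≤ m := (b.filter (fun x => w < x)).min'_le
            m (Finset.mem_filter.2 ⟨hmb, lt_trans hwp1 hm1⟩)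
          have hw'p1 : p.1 < w' := by
            rcases lt_trichotomy w' p.1 with h | h | h
            · have : w' ≤ w := (b.filter (fun x => x < p.1)).le_max'
                w' (Finset.mem_filter.2 ⟨hw'b, h⟩)
              exact absurd hww' (not_lt.2 this)
            · exact absurd (h ▸ hw'b) hp1nb
            · exact h
          have hgap : ∀ k ∈ b, ¬(w < k ∧ k < w') := by
            rintro k hk ⟨hk1, hk2⟩
            have : w' ≤ k := (b.filter (fun x => w < x)).min'_le
              k (Finset.mem_filter.2 ⟨hk, hk1⟩)
            exact absurd hk2 (not_lt.2 this)
          refine ⟨(w, w'), consec_arc P hb hwb hw'b hww' hgap, hwb, hw'b, Or.inr ?_⟩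
          exact ⟨hwp1, hw'p1, lt_of_le_of_lt hw'm hm2⟩
        · -- p.2 < u : crossing arc jumping over p.2
          have hne1 : (b.filter (fun x => p.2 < x)).Nonempty :=
            ⟨u, Finset.mem_filter.2 ⟨hub, hur⟩⟩
          set w := (b.filter (fun x => p.2 < x)).min' hne1 with hwdef
          have hwmem := (b.filter (fun x => p.2 < x)).min'_mem hne1
          have hwb : w ∈ b := (Finset.mem_filter.1 hwmem).1
          have hwp2 : p.2 < w := (Finset.mem_filter.1 hwmem).2
          have hne2 : (b.filter (fun x => x < w)).Nonempty :=
            ⟨m, Finset.mem_filter.2 ⟨hmb, lt_trans hm2 hwp2⟩⟩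
          set w' := (b.filter (fun x => x < w)).max' hne2 with hw'def
          have hw'mem := (b.filter (fun x => x < w)).max'_mem hne2
          have hw'b : w' ∈ b := (Finset.mem_filter.1 hw'mem).1
          have hw'w : w' < w := (Finset.mem_filter.1 hw'mem).2
          have hmw' : m ≤ w' := (b.filter (fun x => x < w)).le_max'
            m (Finset.mem_filter.2 ⟨hmb, lt_trans hm2 hwp2⟩)
          have hw'p2 : w' < p.2 := by
            rcases lt_trichotomy w' p.2 with h | h | h
            · exact h
            · exact absurd (h ▸ hw'b) hp2nb
            · have : w ≤ w' := (b.filter (fun x => p.2 < x)).min'_le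
                w' (Finset.mem_filter.2 ⟨hw'b, h⟩)
              exact absurd hw'w (not_lt.2 this)
          have hgap : ∀ k ∈ b, ¬(w' < k ∧ k < w) := by
            rintro k hk ⟨hk1, hk2⟩
            have : k ≤ w' := (b.filter (fun x => x < w)).le_max'
              k (Finset.mem_filter.2 ⟨hk, hk2⟩)
            exact absurd hk1 (not_lt.2 this)
          refine ⟨(w', w), consec_arc P hb hw'b hwb hw'w hgap, hw'b, hwb, Or.inl ?_⟩
          exact ⟨lt_of_lt_of_le hm1 hmw', hw'p2, hwp2⟩
      rw [if_neg hall, if_pos hcross]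
      have := Finset.card_erase_add_one (hmS)
      omega
  · -- S empty
    rw [Finset.not_nonempty_iff_eq_empty] at hSne
    have hnoin : ∀ v ∈ b, ¬(p.1 < v ∧ v < p.2) := by
      intro v hv hcon
      have : v ∈ S := (hmemS v).2 ⟨hv, hcon⟩
      simp [hSne] at this
    have h1 : ((arcs P).filter
        (fun α => α.1 ∈ b ∧ α.2 ∈ b ∧ p.1 < α.1 ∧ α.2 < p.2)).card = 0 := by
      rw [Finset.card_eq_zero, Finset.filter_eq_empty_iff]
      rintro α hα ⟨hα1b, hα2b, hn1, hn2⟩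
      have h12 : α.1 < α.2 := ((mem_arcs P).1 hα).1
      exact hnoin α.1 hα1b ⟨hn1, lt_trans h12 hn2⟩
    have h2 : ¬∀ v ∈ b, p.1 < v ∧ v < p.2 := by
      obtain ⟨x, hx⟩ := P.nonempty_of_mem_parts hb
      intro h
      exact hnoin x hx (h x hx)
    have h3 : ¬∃ q ∈ arcs P, q.1 ∈ b ∧ q.2 ∈ b ∧ ArcCross p q := by
      rintro ⟨q, hqarc, hq1b, hq2b, hcross⟩
      have h12 : q.1 < q.2 := ((mem_arcs P).1 hqarc).1
      rcases hcross with ⟨c1, c2, c3⟩ | ⟨c1, c2, c3⟩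
      · exact hnoin q.1 hq1b ⟨c1, c2⟩
      · exact hnoin q.2 hq2b ⟨c2, c3⟩
    rw [hSne, h1, if_neg h2, if_neg h3]
    simp

end Aux
/-- for every set partition `A` of `{1,…,n}`,
`Σ_α cross(α) = Σ_v depth(v) − Σ_α depth(α) − Σ_β depth(β)`, summing over
arcs `α`, vertices `v` and blocks `β` of `A`. -/
theorem stmt3 (n : ℕ) (P : Finpartition (Finset.univ : Finset (Fin n))) :
    (∑ α ∈ arcs P, (crossNum P α : ℤ))
      = (∑ v : Fin n, (depthV P v : ℤ)) - (∑ α ∈ arcs P, (depthArc P α : ℤ))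
          - ∑ b ∈ P.parts, (depthBlock P b : ℤ) := by
  have hA : (∑ v : Fin n, depthV P v)
      = ∑ p ∈ arcs P,
          (Finset.univ.filter (fun v : Fin n => p.1 < v ∧ v < p.2)).card := by
    simp only [depthV, Finset.card_filter]
    exact Finset.sum_comm
  have hB : (∑ α ∈ arcs P, depthArc P α)
      = ∑ p ∈ arcs P,
          ((arcs P).filter (fun α => p.1 < α.1 ∧ α.2 < p.2)).card := by
    simp only [depthArc, Finset.card_filter]
    exact Finset.sum_comm
  have hC : (∑ b ∈ P.parts, depthBlock P b)
      = ∑ p ∈ arcs P,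
          (P.parts.filter (fun b => ∀ v ∈ b, p.1 < v ∧ v < p.2)).card := by
    simp only [depthBlock, Finset.card_filter]
    exact Finset.sum_comm
  have hD : ∀ p : Fin n × Fin n,
      (Finset.univ.filter (fun v : Fin n => p.1 < v ∧ v < p.2)).card
        = ∑ b ∈ P.parts, (b.filter (fun v => p.1 < v ∧ v < p.2)).card := by
    intro p
    conv_lhs => rw [← P.biUnion_parts]
    rw [Finset.filter_biUnion, Finset.card_biUnion]
    · simp only [id]
    · intro x hx y hy hxy
      exact Finset.disjoint_filter_filter (P.disjoint hx hy hxy)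
  have hE : ∀ p : Fin n × Fin n,
      ((arcs P).filter (fun α => p.1 < α.1 ∧ α.2 < p.2)).card
        = ∑ b ∈ P.parts,
            ((arcs P).filter
              (fun α => α.1 ∈ b ∧ α.2 ∈ b ∧ p.1 < α.1 ∧ α.2 < p.2)).card := by
    intro p
    simp only [Finset.card_filter]
    rw [Finset.sum_comm]
    refine Finset.sum_congr rfl fun α hα => ?_
    by_cases hn : p.1 < α.1 ∧ α.2 < p.2
    · have hsame : ∑ b ∈ P.parts,
          (if α.1 ∈ b ∧ α.2 ∈ b ∧ p.1 < α.1 ∧ α.2 < p.2 then 1 else 0)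
          = ∑ b ∈ P.parts, (if α.1 ∈ b ∧ α.2 ∈ b then 1 else 0) :=
        Finset.sum_congr rfl fun b _ => by simp [hn.1, hn.2]
      rw [if_pos hn, hsame, ← Finset.card_filter, block_count P hα]
    · simp [hn]
  have hnat : (∑ v : Fin n, depthV P v)
      = (∑ α ∈ arcs P, crossNum P α) + (∑ α ∈ arcs P, depthArc P α)
        + ∑ b ∈ P.parts, depthBlock P b := by
    rw [hA, hB, hC]
    have hmain : ∀ p ∈ arcs P,
        (Finset.univ.filter (fun v : Fin n => p.1 < v ∧ v < p.2)).card
          = ((arcs P).filter (fun α => p.1 < α.1 ∧ α.2 < p.2)).card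
            + ((P.parts.filter (fun b => ∀ v ∈ b, p.1 < v ∧ v < p.2)).card
              + crossNum P p) := by
      intro p hp
      rw [hD p, hE p]
      have h1 : (P.parts.filter (fun b => ∀ v ∈ b, p.1 < v ∧ v < p.2)).card
          = ∑ b ∈ P.parts, (if ∀ v ∈ b, p.1 < v ∧ v < p.2 then 1 else 0) :=
        Finset.card_filter _ _
      have h2 : crossNum P p
          = ∑ b ∈ P.parts,
              (if ∃ q ∈ arcs P, q.1 ∈ b ∧ q.2 ∈ b ∧ ArcCross p q then 1 else 0) :=
        Finset.card_filter _ _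
      rw [h1, h2, ← Finset.sum_add_distrib, ← Finset.sum_add_distrib]
      exact Finset.sum_congr rfl fun b hb => key_lemma P hp hb
    rw [Finset.sum_congr rfl hmain, Finset.sum_add_distrib, Finset.sum_add_distrib]
    omega
  have h := congrArg (fun k : ℕ => (k : ℤ)) hnat
  push_cast at h
  linarith
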